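/- For every k ≥ 1 there exists a constant c(k) such that the greedy partition of every flip k-sequence has at most c(k) blocks. -/

import Mathlib

open Set

/-- `h` is an (affine) hyperplane in `ℝ^d`: the solution set of a nontrivial
linear equation `∑ i, u i * x i = c`. -/
def IsHyperplane {d : ℕ} (h : Set (Fin d → ℝ)) : Prop :=
  ∃ (u : Fin d → ℝ) (c : ℝ), u ≠ 0 ∧ h = {x | ∑ i, u i * x i = c}

/-- A curve `γ` is `k`-crossing on the interval `I` if for every hyperplane `h`
the set `{t ∈ I : γ t ∈ h}` has at most `k` elements. -/
def CurveCrossing {d : ℕ} (k : ℕ) (I : Set ℝ) (γ : ℝ → (Fin d → ℝ)) : Prop :=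
  ∀ h : Set (Fin d → ℝ), IsHyperplane h → {t | t ∈ I ∧ γ t ∈ h}.encard ≤ (k : ℕ∞)

/-- The polygonal path `p 0 p 1 ⋯ p (n-1)`, as a subset of `ℝ^d`
(the union of its edges). -/
def PathSet {d n : ℕ} (p : Fin n → (Fin d → ℝ)) : Set (Fin d → ℝ) :=
  ⋃ (i : Fin n) (h : (i : ℕ) + 1 < n), segment ℝ (p i) (p ⟨(i : ℕ) + 1, h⟩)

/-- A polygonal path is `k`-crossing if every hyperplane containing no edge of the
path intersects the path in at most `k` points. -/
def PathCrossing {d n : ℕ} (k : ℕ) (p : Fin n → (Fin d → ℝ)) : Prop :=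
  ∀ h : Set (Fin d → ℝ), IsHyperplane h →
    (∀ (i : Fin n) (hi : (i : ℕ) + 1 < n), ¬ segment ℝ (p i) (p ⟨(i : ℕ) + 1, hi⟩) ⊆ h) →
    (PathSet p ∩ h).encard ≤ (k : ℕ∞)

/-- A point sequence in `ℝ^d` is in general position if every at most `d+1` of the
points are affinely independent. -/
def GeneralPosition {d n : ℕ} (p : Fin n → (Fin d → ℝ)) : Prop :=
  ∀ s : Finset (Fin n), s.card ≤ d + 1 → AffineIndependent ℝ (fun i : s => p i)

/-- The sign (orientation) of an ordered `(d+1)`-tuple of points of `ℝ^d`: the sign of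
the determinant of the `(d+1) × (d+1)` matrix whose `j`-th column is `(1, q j)`. -/
noncomputable def otSign {d : ℕ} (q : Fin (d + 1) → (Fin d → ℝ)) : ℝ :=
  Real.sign (Matrix.det (Matrix.of fun i j : Fin (d + 1) =>
    (Fin.cons (1 : ℝ) (q j) : Fin (d + 1) → ℝ) i))

/-- A point sequence is order-type homogeneous if all of its increasing-index
`(d+1)`-tuples have the same nonzero sign. -/
def OrderTypeHomogeneous {d n : ℕ} (p : Fin n → (Fin d → ℝ)) : Prop :=
  ∃ σ : ℝ, σ ≠ 0 ∧ ∀ f : Fin (d + 1) → Fin n, StrictMono f →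
    otSign (fun j => p (f j)) = σ

/-- The sign of a `(d+1)`-element subset of the index set of a point sequence:
the sign of the corresponding increasing-index `(d+1)`-tuple (junk value `0` if the
set does not have `d+1` elements). -/
noncomputable def finsetSign {d n : ℕ} (p : Fin n → (Fin d → ℝ)) (s : Finset (Fin n)) : ℝ :=
  if h : s.card = d + 1 then otSign (fun j => p ((s.orderIsoOfFin h) j : Fin n)) else 0

/-- A point sequence in `ℝ^d` is in super-general position if for each `1 ≤ k ≤ d` its
projection to the first `k` coordinates is in general position. -/
def SuperGeneralPosition {d n : ℕ} (p : Fin n → (Fin d → ℝ)) : Prop :=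
  ∀ (k : ℕ), 1 ≤ k → ∀ (hk : k ≤ d),
    GeneralPosition (fun i => fun j : Fin k => p i (Fin.castLE hk j))

/-- A point sequence in `ℝ^d` is super-order-type homogeneous if for each `1 ≤ k ≤ d` its
projection to the first `k` coordinates is order-type homogeneous. -/
def SuperOrderTypeHomogeneous {d n : ℕ} (p : Fin n → (Fin d → ℝ)) : Prop :=
  ∀ (k : ℕ), 1 ≤ k → ∀ (hk : k ≤ d),
    OrderTypeHomogeneous (fun i => fun j : Fin k => p i (Fin.castLE hk j))

/-- `OTNum d n` is the smallest `N` such that every sequence of `N` points in general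
position in `ℝ^d` contains an order-type homogeneous subsequence of length `n`. -/
noncomputable def OTNum (d n : ℕ) : ℕ :=
  sInf {N : ℕ | ∀ p : Fin N → (Fin d → ℝ), GeneralPosition p →
    ∃ f : Fin n → Fin N, StrictMono f ∧ OrderTypeHomogeneous (fun i => p (f i))}

/-- `COTNum d n` is the smallest `N` such that every sequence of `N` points in
super-general position in `ℝ^d` contains a super-order-type homogeneous subsequence
of length `n`. -/
noncomputable def COTNum (d n : ℕ) : ℕ :=
  sInf {N : ℕ | ∀ p : Fin N → (Fin d → ℝ), SuperGeneralPosition p →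
    ∃ f : Fin n → Fin N, StrictMono f ∧ SuperOrderTypeHomogeneous (fun i => p (f i))}

/-- The tower function: `twr 1 x = x` and `twr (i+1) x = 2 ^ twr i x`. -/
def twr (k x : ℕ) : ℕ := (fun y => 2 ^ y)^[k - 1] x

/-- `t` is an `ε`-sample of the interval `[a, b]`: an increasing tuple of points of
`[a, b]` meeting every subinterval of `[a, b]` of length `ε`. -/
def IsEpsSample (a b ε : ℝ) {n : ℕ} (t : Fin n → ℝ) : Prop :=
  StrictMono t ∧ (∀ i, t i ∈ Set.Icc a b) ∧
    ∀ x : ℝ, Set.Icc x (x + ε) ⊆ Set.Icc a b → ∃ i, t i ∈ Set.Icc x (x + ε)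

/-- All `(k+1)`-element subsets of the index interval `[a, b]` have the same sign. -/
def IntervalHomog {n : ℕ} (k : ℕ) (sgn : Finset (Fin n) → Bool) (a b : Fin n) : Prop :=
  ∃ σ : Bool, ∀ s : Finset (Fin n), s.card = k + 1 → (∀ i ∈ s, a ≤ i ∧ i ≤ b) → sgn s = σ

/-- `c 0 = 0 < c 1 < ⋯ < c m = n - 1` are the cut points of the greedy partition of the
`k`-sequence on `Fin n` with sign function `sgn` into the `m` blocks
`[c 0, c 1], [c 1, c 2], …, [c (m-1), c m]` (consecutive blocks overlap in one point):
each block has all its `(k+1)`-element subsets of the same sign, and each block is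
maximal with this property (cannot be extended to the right). -/
def IsGreedyPartition {n : ℕ} (k : ℕ) (sgn : Finset (Fin n) → Bool) (m : ℕ)
    (c : Fin (m + 1) → Fin n) : Prop :=
  (c 0 : ℕ) = 0 ∧ (c (Fin.last m) : ℕ) = n - 1 ∧ StrictMono c ∧
    (∀ j : Fin m, IntervalHomog k sgn (c j.castSucc) (c j.succ)) ∧
    (∀ j : Fin m, ∀ e : Fin n, c j.succ < e → ¬ IntervalHomog k sgn (c j.castSucc) e)

/-- A `k`-sequence is a flip `k`-sequence if for every `k`-element subset `A` of indices
the sign sequence `(sgn (insert i A) : i ∉ A)` (indices in increasing order) has at most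
one sign change; for `±`-valued sequences this says there are no positions `i < j < l`
with `sgn (insert i A) ≠ sgn (insert j A)` and `sgn (insert j A) ≠ sgn (insert l A)`. -/
def FlipSeq {n : ℕ} (k : ℕ) (sgn : Finset (Fin n) → Bool) : Prop :=
  ∀ A : Finset (Fin n), A.card = k →
    ¬ ∃ i j l : Fin n, i < j ∧ j < l ∧ i ∉ A ∧ j ∉ A ∧ l ∉ A ∧
      sgn (insert i A) ≠ sgn (insert j A) ∧ sgn (insert j A) ≠ sgn (insert l A)

namespace FlipAux

variable {n : ℕ}

/-- Bounded flip property: rows of `k`-sets below `N` have at most one sign change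
at positions below `N`. -/
def FlipB (n k N : ℕ) (sgn : Finset (Fin n) → Bool) : Prop :=
  ∀ A : Finset (Fin n), A.card = k → (∀ x ∈ A, (x : ℕ) < N) →
    ∀ i j l : Fin n, i < j → j < l → (l : ℕ) < N →
      i ∉ A → j ∉ A → l ∉ A →
      sgn (insert i A) ≠ sgn (insert j A) → sgn (insert l A) = sgn (insert j A)

/-- A witness: a `k`-set `B` inside `[lo,hi]` whose sign row equals `a` below `lo`,
`!a` above `hi`, with explicit points `u < v` in `[lo,hi]` realizing both values. -/
structure Wit (n k N : ℕ) (sgn : Finset (Fin n) → Bool) : Type where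
  B : Finset (Fin n)
  lo : ℕ
  hi : ℕ
  u : Fin n
  v : Fin n
  a : Bool
  hcard : B.card = k
  hBlo : ∀ x ∈ B, lo ≤ (x : ℕ)
  hBhi : ∀ x ∈ B, (x : ℕ) ≤ hi
  hhiN : hi < N
  hlou : lo ≤ (u : ℕ)
  hvhi : (v : ℕ) ≤ hi
  huv : u < v
  hu : u ∉ B
  hv : v ∉ B
  hus : sgn (insert u B) = a
  hvs : sgn (insert v B) = !a
  head : ∀ i : Fin n, (i : ℕ) < lo → i ∉ B → sgn (insert i B) = a
  tail : ∀ i : Fin n, hi < (i : ℕ) → (i : ℕ) < N → i ∉ B → sgn (insert i B) = !a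

variable {k N : ℕ} {sgn : Finset (Fin n) → Bool}

lemma Wit.lo_le_hi (w : Wit n k N sgn) : w.lo ≤ w.hi := by
  have h1 := w.hlou
  have h2 := w.hvhi
  have h3 := w.huv
  rw [Fin.lt_def] at h3
  omega

/-- Separation of witnesses. -/
def WSep (w1 w2 : Wit n k N sgn) : Prop := w1.hi < w2.lo

lemma bool_ne_iff {a b : Bool} : a ≠ b ↔ b = !a := by
  cases a <;> cases b <;> simp

variable {n : ℕ}

/-- Swap-path lemma: two sets of size `κ+1`, with `X` entirely below `Y` and
different `f`-values, admit a one-swap disagreement oriented from `X`'s value. -/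
lemma path (f : Finset (Fin n) → Bool) (κ : ℕ) (X Y : Finset (Fin n))
    (hXY : ∀ x ∈ X, ∀ y ∈ Y, x < y) (hXc : X.card = κ + 1) (hYc : Y.card = κ + 1)
    (hne : f X ≠ f Y) :
    ∃ (C : Finset (Fin n)) (u v : Fin n), C.card = κ ∧ u < v ∧ u ∉ C ∧ v ∉ C ∧
      C ⊆ X ∪ Y ∧ u ∈ X ∧ v ∈ Y ∧
      f (insert u C) = f X ∧ f (insert v C) ≠ f X := by
  suffices H : ∀ (d : ℕ) (Z : Finset (Fin n)), (Z \ Y).card = d → Z.card = κ + 1 →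
      Z ⊆ X ∪ Y → f Z = f X →
      ∃ (C : Finset (Fin n)) (u v : Fin n), C.card = κ ∧ u < v ∧ u ∉ C ∧ v ∉ C ∧
        C ⊆ X ∪ Y ∧ u ∈ X ∧ v ∈ Y ∧
        f (insert u C) = f X ∧ f (insert v C) ≠ f X by
    exact H (X \ Y).card X rfl hXc Finset.subset_union_left rfl
  intro d
  induction d with
  | zero =>
    intro Z hZd hZc hZsub hZf
    exfalso
    have hZY : Z = Y := by
      have hsub : Z ⊆ Y := by
        intro x hx
        by_contra hxY
        have : x ∈ Z \ Y := Finset.mem_sdiff.mpr ⟨hx, hxY⟩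
        have := Finset.card_eq_zero.mp hZd
        simp [this] at *
      exact Finset.eq_of_subset_of_card_le hsub (by omega)
    exact hne (hZf ▸ hZY ▸ rfl)
  | succ d ih =>
    intro Z hZd hZc hZsub hZf
    -- pick x ∈ Z \ Y
    have hx : (Z \ Y).Nonempty := by
      rw [← Finset.card_pos, hZd]; omega
    obtain ⟨x, hxmem⟩ := hx
    obtain ⟨hxZ, hxY⟩ := Finset.mem_sdiff.mp hxmem
    have hxX : x ∈ X := by
      rcases Finset.mem_union.mp (hZsub hxZ) with h | h
      · exact h
      · exact absurd h hxY
    -- pick y ∈ Y \ Z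
    have hy : (Y \ Z).Nonempty := by
      by_contra hcon
      rw [Finset.not_nonempty_iff_eq_empty, Finset.sdiff_eq_empty_iff_subset] at hcon
      have : Y = Z := Finset.eq_of_subset_of_card_le hcon (by omega)
      exact hne (by rw [this, hZf])
    obtain ⟨y, hymem⟩ := hy
    obtain ⟨hyY, hyZ⟩ := Finset.mem_sdiff.mp hymem
    set C := Z.erase x with hC
    have hCcard : C.card = κ := by
      rw [hC, Finset.card_erase_of_mem hxZ, hZc]; omega
    have hCsub : C ⊆ X ∪ Y := fun z hz => hZsub (Finset.mem_of_mem_erase hz)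
    have hyC : y ∉ C := fun h => hyZ (Finset.mem_of_mem_erase h)
    have hinsx : insert x C = Z := Finset.insert_erase hxZ
    set Z' := insert y C with hZ'
    by_cases hcase : f Z' = f Z
    · -- recurse
      have hZ'c : Z'.card = κ + 1 := by
        rw [hZ', Finset.card_insert_of_notMem hyC, hCcard]
      have hZ'sub : Z' ⊆ X ∪ Y := by
        intro z hz
        rcases Finset.mem_insert.mp hz with h | h
        · exact h ▸ Finset.mem_union_right _ hyY
        · exact hCsub h
      have hZ'd : (Z' \ Y).card = d := by
        have h1 : Z' \ Y = C \ Y := by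
          rw [hZ', Finset.insert_sdiff_of_mem _ hyY]
        have h2 : C \ Y = (Z \ Y).erase x := by
          ext z
          simp only [hC, Finset.mem_sdiff, Finset.mem_erase]
          tauto
        rw [h1, h2, Finset.card_erase_of_mem hxmem, hZd]; omega
      exact ih Z' hZ'd hZ'c hZ'sub (by rw [hcase, hZf])
    · -- found the disagreement
      refine ⟨C, x, y, hCcard, hXY x hxX y hyY, Finset.notMem_erase x Z, hyC,
        hCsub, hxX, hyY, ?_, ?_⟩
      · rw [hinsx, hZf]
      · rw [← hZ']
        intro h
        exact hcase (by rw [h, hZf])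


variable {k N : ℕ} {sgn : Finset (Fin n) → Bool}

/-- Build a witness from a single localized disagreement, using the flip property. -/
def mkWit (hf : FlipB n k N sgn) (C : Finset (Fin n)) (u v : Fin n) (lo hi : ℕ)
    (hC : C.card = k) (hClo : ∀ x ∈ C, lo ≤ (x : ℕ)) (hChi : ∀ x ∈ C, (x : ℕ) ≤ hi)
    (hhiN : hi < N) (hlou : lo ≤ (u : ℕ)) (hvhi : (v : ℕ) ≤ hi) (huv : u < v)
    (hu : u ∉ C) (hv : v ∉ C) (hne : sgn (insert u C) ≠ sgn (insert v C)) :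
    Wit n k N sgn where
  B := C
  lo := lo
  hi := hi
  u := u
  v := v
  a := sgn (insert u C)
  hcard := hC
  hBlo := hClo
  hBhi := hChi
  hhiN := hhiN
  hlou := hlou
  hvhi := hvhi
  huv := huv
  hu := hu
  hv := hv
  hus := rfl
  hvs := bool_ne_iff.mp hne
  head := by
    intro i hilo hiC
    by_contra hcon
    have hiu : i < u := by rw [Fin.lt_def]; omega
    have hvN : (v : ℕ) < N := by omega
    have hCb : ∀ x ∈ C, (x : ℕ) < N := fun x hx => by have := hChi x hx; omega
    exact hne (hf C hC hCb i u v hiu huv hvN hiC hu hv hcon).symm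
  tail := by
    intro i hhii hiN hiC
    have hvi : v < i := by rw [Fin.lt_def]; omega
    have hCb : ∀ x ∈ C, (x : ℕ) < N := fun x hx => by have := hChi x hx; omega
    have := hf C hC hCb u v i huv hvi hiN hu hv hiC hne
    rw [this]
    exact bool_ne_iff.mp hne

/-- Anchoring: restricting attention below an anchor point `a` and inserting `a`
into every set drops the level by one. -/
lemma flipB_anchor {N' : ℕ} (hf : FlipB n (k + 1) N sgn) (a : Fin n)
    (hN'a : N' ≤ (a : ℕ)) (haN : (a : ℕ) < N) :
    FlipB n k N' (fun X => sgn (insert a X)) := by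
  intro A hA hAb i j l hij hjl hlN' hi hj hl hne
  have ha : a ∉ A := fun h => by have := hAb a h; omega
  have hiN' : (i : ℕ) < N' := by
    have h1 : (i : ℕ) < (j : ℕ) := Fin.lt_def.mp hij
    have h2 : (j : ℕ) < (l : ℕ) := Fin.lt_def.mp hjl
    omega
  have hjN' : (j : ℕ) < N' := by
    have h2 : (j : ℕ) < (l : ℕ) := Fin.lt_def.mp hjl
    omega
  have hA' : (insert a A).card = k + 1 := by
    rw [Finset.card_insert_of_notMem ha, hA]
  have hA'b : ∀ x ∈ insert a A, (x : ℕ) < N := by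
    intro x hx
    rcases Finset.mem_insert.mp hx with h | h
    · rw [h]; exact haN
    · have := hAb x h; omega
  have hine : i ≠ a := fun h => by rw [h] at hiN'; omega
  have hjne : j ≠ a := fun h => by rw [h] at hjN'; omega
  have hlne : l ≠ a := fun h => by rw [h] at hlN'; omega
  have hi' : i ∉ insert a A := by simp [Finset.mem_insert, hine, hi]
  have hj' : j ∉ insert a A := by simp [Finset.mem_insert, hjne, hj]
  have hl' : l ∉ insert a A := by simp [Finset.mem_insert, hlne, hl]
  have hlN : (l : ℕ) < N := by omega
  have comm : ∀ z : Fin n, insert a (insert z A) = insert z (insert a A) :=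
    fun z => Finset.insert_comm a z A
  simp only [comm] at hne ⊢
  exact hf (insert a A) hA' hA'b i j l hij hjl hlN hi' hj' hl' hne

/-- Merging two same-sign separated witnesses into an opposite-sign witness. -/
lemma merge (hf : FlipB n k N sgn) (w1 w2 : Wit n k N sgn) (hsep : WSep w1 w2)
    (hab : w1.a = w2.a) :
    ∃ w : Wit n k N sgn, w.a = !w1.a ∧ w.lo = w1.lo ∧ w.hi = w2.hi := by
  have hlh1 := w1.lo_le_hi
  have hlh2 := w2.lo_le_hi
  have hXc : (insert w1.v w1.B).card = k + 1 := by
    rw [Finset.card_insert_of_notMem w1.hv, w1.hcard]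
  have hYc : (insert w2.u w2.B).card = k + 1 := by
    rw [Finset.card_insert_of_notMem w2.hu, w2.hcard]
  have hXb : ∀ x ∈ insert w1.v w1.B, w1.lo ≤ (x : ℕ) ∧ (x : ℕ) ≤ w1.hi := by
    intro x hx
    rcases Finset.mem_insert.mp hx with h | h
    · subst h
      have := w1.hvhi
      have := w1.hlou
      have := Fin.lt_def.mp w1.huv
      omega
    · exact ⟨w1.hBlo x h, w1.hBhi x h⟩
  have hYb : ∀ y ∈ insert w2.u w2.B, w2.lo ≤ (y : ℕ) ∧ (y : ℕ) ≤ w2.hi := by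
    intro y hy
    rcases Finset.mem_insert.mp hy with h | h
    · subst h
      have := w2.hlou
      have := Fin.lt_def.mp w2.huv
      have := w2.hvhi
      omega
    · exact ⟨w2.hBlo y h, w2.hBhi y h⟩
  have hXY : ∀ x ∈ insert w1.v w1.B, ∀ y ∈ insert w2.u w2.B, x < y := by
    intro x hx y hy
    rw [Fin.lt_def]
    have := (hXb x hx).2
    have := (hYb y hy).1
    have : w1.hi < w2.lo := hsep
    omega
  have hfX : sgn (insert w1.v w1.B) = !w1.a := w1.hvs
  have hfY : sgn (insert w2.u w2.B) = w1.a := by rw [w2.hus, hab]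
  have hne : sgn (insert w1.v w1.B) ≠ sgn (insert w2.u w2.B) := by
    rw [hfX, hfY]; exact Bool.not_ne_self w1.a
  obtain ⟨C, u, v, hCc, huv, huC, hvC, hCsub, huX, hvY, hfu, hfv⟩ :=
    path sgn k (insert w1.v w1.B) (insert w2.u w2.B) hXY hXc hYc hne
  have hClo : ∀ x ∈ C, w1.lo ≤ (x : ℕ) := by
    intro x hx
    rcases Finset.mem_union.mp (hCsub hx) with h | h
    · exact (hXb x h).1
    · have := (hYb x h).1
      have : w1.hi < w2.lo := hsep
      omega
  have hChi : ∀ x ∈ C, (x : ℕ) ≤ w2.hi := by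
    intro x hx
    rcases Finset.mem_union.mp (hCsub hx) with h | h
    · have := (hXb x h).2
      have : w1.hi < w2.lo := hsep
      omega
    · exact (hYb x h).2
  have hne2 : sgn (insert u C) ≠ sgn (insert v C) := by
    rw [hfu]
    exact fun h => hfv h.symm
  refine ⟨mkWit hf C u v w1.lo w2.hi hCc hClo hChi w2.hhiN ?_ ?_ huv huC hvC hne2, ?_, rfl, rfl⟩
  · exact (hXb u huX).1
  · exact (hYb v hvY).2
  · show sgn (insert u C) = !w1.a
    rw [hfu, hfX]


/-- Pair up a same-sign family, merging adjacent pairs. -/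
lemma merge_pairs (hf : FlipB n k N sgn) (b : Bool) :
    ∀ (t : ℕ) (l : List (Wit n k N sgn)), l.Pairwise WSep → (∀ w ∈ l, w.a = b) →
      2 * t ≤ l.length →
      ∃ l2 : List (Wit n k N sgn), l2.length = t ∧ l2.Pairwise WSep ∧
        (∀ w2 ∈ l2, w2.a = !b) ∧ (∀ w2 ∈ l2, ∃ w ∈ l, w.lo = w2.lo) := by
  intro t
  induction t with
  | zero =>
    intro l _ _ _
    exact ⟨[], rfl, List.Pairwise.nil, by simp, by simp⟩
  | succ t ih =>
    intro l hp hb hlen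
    match l, hp, hb, hlen with
    | w1 :: w2 :: rest, hp, hb, hlen =>
      have hp1 := List.pairwise_cons.mp hp
      have hp2 := List.pairwise_cons.mp hp1.2
      have hsep12 : WSep w1 w2 := hp1.1 w2 (by simp)
      have hab : w1.a = w2.a := by
        rw [hb w1 (by simp), hb w2 (by simp)]
      obtain ⟨wm, hwa, hwlo, hwhi⟩ := merge hf w1 w2 hsep12 hab
      have hrest : ∀ w ∈ rest, w.a = b := fun w hw => hb w (by simp [hw])
      have hlenr : 2 * t ≤ rest.length := by
        simp only [List.length_cons] at hlen; omega
      obtain ⟨l2', hl2len, hl2p, hl2a, hl2lo⟩ := ih rest hp2.2 hrest hlenr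
      refine ⟨wm :: l2', by simp [hl2len], ?_, ?_, ?_⟩
      · rw [List.pairwise_cons]
        refine ⟨?_, hl2p⟩
        intro w2' hw2'
        obtain ⟨w, hwmem, hwloeq⟩ := hl2lo w2' hw2'
        show wm.hi < w2'.lo
        rw [hwhi, ← hwloeq]
        exact hp2.1 w hwmem
      · intro w2' hw2'
        rcases List.mem_cons.mp hw2' with h | h
        · rw [h, hwa, hb w1 (by simp)]
        · exact hl2a w2' h
      · intro w2' hw2'
        rcases List.mem_cons.mp hw2' with h | h
        · exact ⟨w1, by simp, by rw [h, hwlo]⟩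
        · obtain ⟨w, hwmem, hwloeq⟩ := hl2lo w2' h
          exact ⟨w, by simp [hwmem], hwloeq⟩

/-- Cascade: a same-sign family of size `≥ 2^(j+1) - 1` yields an alternating
family of size `j+1` whose first member has the same sign. -/
lemma cascade (hf : FlipB n k N sgn) :
    ∀ (j : ℕ) (b : Bool) (l : List (Wit n k N sgn)), l.Pairwise WSep →
      (∀ w ∈ l, w.a = b) → 2 ^ (j + 1) ≤ l.length + 1 →
      ∃ (w0 : Wit n k N sgn) (la : List (Wit n k N sgn)),
        (w0 :: la).length = j + 1 ∧ (w0 :: la).Pairwise WSep ∧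
        (w0 :: la).Chain' (fun x y => x.a ≠ y.a) ∧ w0.a = b ∧
        (∀ w2 ∈ w0 :: la, ∃ w ∈ l, w.lo = w2.lo) := by
  intro j
  induction j with
  | zero =>
    intro b l hp hb hlen
    match l, hp, hb, hlen with
    | w :: _, _, hb, _ =>
      exact ⟨w, [], rfl, by simp, List.isChain_singleton w, hb w (by simp), by
        intro w2 hw2
        simp only [List.mem_cons, List.not_mem_nil, or_false] at hw2
        exact ⟨w, by simp, by rw [hw2]⟩⟩
  | succ j ih =>
    intro b l hp hb hlen
    have hlen2 : 2 ≤ l.length := by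
      have h1 : (1:ℕ) ≤ 2 ^ j := Nat.one_le_two_pow
      have h2 : 2 ^ (j + 2) = 4 * 2 ^ j := by ring
      omega
    match l, hp, hb, hlen with
    | w0 :: rest, hp, hb, hlen =>
      have hp1 := List.pairwise_cons.mp hp
      have hrestb : ∀ w ∈ rest, w.a = b := fun w hw => hb w (by simp [hw])
      have hrl : 2 * (2 ^ (j + 1) - 1) ≤ rest.length := by
        simp only [List.length_cons] at hlen
        have h1 : (1:ℕ) ≤ 2 ^ (j+1) := Nat.one_le_two_pow
        have h2 : 2 ^ (j + 2) = 2 * 2 ^ (j + 1) := by ring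
        omega
      obtain ⟨lm, hlmlen, hlmp, hlma, hlmlo⟩ :=
        merge_pairs hf b (2 ^ (j + 1) - 1) rest hp1.2 hrestb hrl
      have hlm2 : 2 ^ (j + 1) ≤ lm.length + 1 := by
        rw [hlmlen]
        have h1 : (1:ℕ) ≤ 2 ^ (j+1) := Nat.one_le_two_pow
        omega
      obtain ⟨w0', la', hlen', hp', hch', ha', hlo'⟩ := ih (!b) lm hlmp hlma hlm2
      refine ⟨w0, w0' :: la', by simpa using hlen', ?_, ?_, hb w0 (by simp), ?_⟩
      · rw [List.pairwise_cons]
        refine ⟨?_, hp'⟩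
        intro w2 hw2
        obtain ⟨wm, hwmmem, hwmlo⟩ := hlo' w2 hw2
        obtain ⟨w, hwmem, hwlo⟩ := hlmlo wm hwmmem
        show w0.hi < w2.lo
        rw [← hwmlo, ← hwlo]
        exact hp1.1 w hwmem
      · rw [List.Chain', List.isChain_cons]
        refine ⟨?_, hch'⟩
        intro y hy
        rw [List.head?_cons, Option.mem_some_iff] at hy
        rw [← hy, hb w0 (by simp), ha']
        exact Ne.symm (Bool.not_ne_self b)
      · intro w2 hw2
        rcases List.mem_cons.mp hw2 with h | h
        · exact ⟨w0, by simp, by rw [h]⟩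
        · obtain ⟨wm, hwmmem, hwmlo⟩ := hlo' w2 h
          obtain ⟨w, hwmem, hwlo⟩ := hlmlo wm hwmmem
          exact ⟨w, by simp [hwmem], by rw [hwlo, hwmlo]⟩


/-- Harvesting an alternating family: anchoring at a point above everything
produces a family one level down, half the size. -/
lemma harvest (hf : FlipB n (k + 1) N sgn) (a : Fin n) (haN : (a : ℕ) < N)
    (N' : ℕ) (hN'a : N' ≤ (a : ℕ)) :
    ∀ (t : ℕ) (l : List (Wit n (k + 1) N sgn)), l.Pairwise WSep →
      l.Chain' (fun x y => x.a ≠ y.a) → (∀ w ∈ l, w.hi < N') → 2 * t ≤ l.length →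
      ∃ l2 : List (Wit n k N' (fun X => sgn (insert a X))), l2.length = t ∧
        l2.Pairwise WSep ∧ (∀ w2 ∈ l2, ∃ w ∈ l, w.lo = w2.lo) := by
  have hf' : FlipB n k N' (fun X => sgn (insert a X)) := flipB_anchor hf a hN'a haN
  intro t
  induction t with
  | zero =>
    intro l _ _ _ _
    exact ⟨[], rfl, List.Pairwise.nil, by simp⟩
  | succ t ih =>
    intro l hp hch hhiN' hlen
    match l, hp, hch, hhiN', hlen with
    | w1 :: w2 :: rest, hp, hch, hhiN', hlen =>
      have hp1 := List.pairwise_cons.mp hp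
      have hp2 := List.pairwise_cons.mp hp1.2
      have hsep12 : WSep w1 w2 := hp1.1 w2 (by simp)
      have hane : w1.a ≠ w2.a := by
        have := List.isChain_cons_cons.mp hch
        exact this.1
      -- anchor values
      have haB : ∀ (w : Wit n (k+1) N sgn), w ∈ w1 :: w2 :: rest →
          sgn (insert a w.B) = !w.a := by
        intro w hw
        have hhi : w.hi < N' := hhiN' w hw
        have hanotB : a ∉ w.B := by
          intro hmem
          have := w.hBhi a hmem
          omega
        exact w.tail a (by omega) haN hanotB
      have hXY : ∀ x ∈ w1.B, ∀ y ∈ w2.B, x < y := by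
        intro x hx y hy
        rw [Fin.lt_def]
        have := w1.hBhi x hx
        have := w2.hBlo y hy
        have : w1.hi < w2.lo := hsep12
        omega
      have hne : (fun X => sgn (insert a X)) w1.B ≠ (fun X => sgn (insert a X)) w2.B := by
        simp only
        rw [haB w1 (by simp), haB w2 (by simp)]
        intro h
        apply hane
        cases hx : w1.a <;> cases hy : w2.a <;> simp_all
      obtain ⟨C, u, v, hCc, huv, huC, hvC, hCsub, huX, hvY, hfu, hfv⟩ :=
        path (fun X => sgn (insert a X)) k w1.B w2.B hXY w1.hcard w2.hcard hne
      have hClo : ∀ x ∈ C, w1.lo ≤ (x : ℕ) := by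
        intro x hx
        rcases Finset.mem_union.mp (hCsub hx) with h | h
        · exact w1.hBlo x h
        · have := w2.hBlo x h
          have : w1.hi < w2.lo := hsep12
          have := w1.lo_le_hi
          omega
      have hChi : ∀ x ∈ C, (x : ℕ) ≤ w2.hi := by
        intro x hx
        rcases Finset.mem_union.mp (hCsub hx) with h | h
        · have := w1.hBhi x h
          have : w1.hi < w2.lo := hsep12
          have := w2.lo_le_hi
          omega
        · exact w2.hBhi x h
      have hne2 : (fun X => sgn (insert a X)) (insert u C) ≠
          (fun X => sgn (insert a X)) (insert v C) := by
        show sgn (insert a (insert u C)) ≠ sgn (insert a (insert v C))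
        rw [hfu]
        exact fun h => hfv h.symm
      set wm := mkWit hf' C u v w1.lo w2.hi hCc hClo hChi (hhiN' w2 (by simp))
        (w1.hBlo u huX) (w2.hBhi v hvY) huv huC hvC hne2 with hwm
      have hchrest : rest.Chain' (fun x y => x.a ≠ y.a) :=
        ((List.isChain_cons_cons.mp hch).2).tail
      have hrest : ∀ w ∈ rest, w.hi < N' := fun w hw => hhiN' w (by simp [hw])
      have hlenr : 2 * t ≤ rest.length := by
        simp only [List.length_cons] at hlen; omega
      obtain ⟨l2', hl2len, hl2p, hl2lo⟩ := ih rest hp2.2 hchrest hrest hlenr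
      refine ⟨wm :: l2', by simp [hl2len], ?_, ?_⟩
      · rw [List.pairwise_cons]
        refine ⟨?_, hl2p⟩
        intro w2' hw2'
        obtain ⟨w, hwmem, hwloeq⟩ := hl2lo w2' hw2'
        show wm.hi < w2'.lo
        have : wm.hi = w2.hi := rfl
        rw [this, ← hwloeq]
        exact hp2.1 w hwmem
      · intro w2' hw2'
        rcases List.mem_cons.mp hw2' with h | h
        · exact ⟨w1, by simp, by rw [h]; rfl⟩
        · obtain ⟨w, hwmem, hwloeq⟩ := hl2lo w2' h
          exact ⟨w, by simp [hwmem], hwloeq⟩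

/-- At level `0`, at most one witness can exist. -/
lemma base0 (hf : FlipB n 0 N sgn) (l : List (Wit n 0 N sgn)) (hp : l.Pairwise WSep) :
    l.length ≤ 1 := by
  by_contra hcon
  push_neg at hcon
  match l, hp, hcon with
  | w1 :: w2 :: _, hp, _ =>
    have hsep : WSep w1 w2 := (List.pairwise_cons.mp hp).1 w2 (by simp)
    have hB1 : w1.B = ∅ := Finset.card_eq_zero.mp w1.hcard
    have hB2 : w2.B = ∅ := Finset.card_eq_zero.mp w2.hcard
    have h1u : sgn (insert w1.u (∅ : Finset (Fin n))) = w1.a := by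
      have := w1.hus; rwa [hB1] at this
    have h1v : sgn (insert w1.v (∅ : Finset (Fin n))) = !w1.a := by
      have := w1.hvs; rwa [hB1] at this
    have h2u : sgn (insert w2.u (∅ : Finset (Fin n))) = w2.a := by
      have := w2.hus; rwa [hB2] at this
    have h2v : sgn (insert w2.v (∅ : Finset (Fin n))) = !w2.a := by
      have := w2.hvs; rwa [hB2] at this
    have hvu : w1.v < w2.u := by
      rw [Fin.lt_def]
      have := w1.hvhi
      have := w2.hlou
      have : w1.hi < w2.lo := hsep
      omega
    have hne1 : sgn (insert w1.u (∅ : Finset (Fin n))) ≠ sgn (insert w1.v ∅) := by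
      rw [h1u, h1v]
      exact Ne.symm (Bool.not_ne_self w1.a)
    have hemp : ∀ x ∈ (∅ : Finset (Fin n)), (x : ℕ) < N := by simp
    by_cases hc : w2.a = w1.a
    · have := hf ∅ rfl hemp w1.u w1.v w2.u w1.huv hvu
        (by have h1 := Fin.lt_def.mp w2.huv; have h2 := w2.hvhi; have h3 := w2.hhiN; omega)
        (by simp) (by simp) (by simp) hne1
      rw [h2u, h1v, hc] at this
      exact (Bool.not_ne_self w1.a) this.symm
    · have hvv : w1.v < w2.v := by
        rw [Fin.lt_def]
        have := w1.hvhi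
        have := w2.hlou
        have := Fin.lt_def.mp w2.huv
        have : w1.hi < w2.lo := hsep
        omega
      have := hf ∅ rfl hemp w1.u w1.v w2.v w1.huv hvv
        (by have := w2.hvhi; have := w2.hhiN; omega)
        (by simp) (by simp) (by simp) hne1
      rw [h2v, h1v] at this
      have : w2.a = w1.a := by
        cases hx : w1.a <;> cases hy : w2.a <;> simp_all
      exact hc this


/-- The bound on family sizes. -/
def Gfun : ℕ → ℕ
  | 0 => 1
  | (k + 1) => 2 ^ (2 * Gfun k + 4)

/-- Main bound: a separated family of witnesses at level `k` has size at most `Gfun k`. -/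
lemma main_bound : ∀ (k : ℕ) (N : ℕ) (sgn : Finset (Fin n) → Bool)
    (l : List (Wit n k N sgn)), FlipB n k N sgn → l.Pairwise WSep →
    l.length ≤ Gfun k := by
  intro k
  induction k with
  | zero => intro N sgn l hf hp; exact base0 hf l hp
  | succ k ih =>
    intro N sgn l hf hp
    by_contra hcon
    push_neg at hcon
    rw [Gfun] at hcon
    -- one of the two sign classes is large
    have hsplit := List.length_eq_length_filter_add (fun w => w.a) (l := l)
    have hbig : ∃ b : Bool, 2 ^ (2 * Gfun k + 3) ≤
        (l.filter (fun w => w.a == b)).length := by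
      by_cases hc : 2 ^ (2 * Gfun k + 3) ≤ (l.filter (fun w => w.a)).length
      · refine ⟨true, ?_⟩
        have : (l.filter (fun w => w.a == true)) = (l.filter (fun w => w.a)) := by
          simp
        rw [this]; exact hc
      · refine ⟨false, ?_⟩
        push_neg at hc
        have heq : (l.filter (fun w => w.a == false)) = (l.filter (fun w => !w.a)) := by
          apply List.filter_congr
          intro w _
          cases w.a <;> simp
        rw [heq]
        have hpow : 2 ^ (2 * Gfun k + 4) = 2 ^ (2 * Gfun k + 3) + 2 ^ (2 * Gfun k + 3) := by
          ring
        omega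
    obtain ⟨b, hble⟩ := hbig
    set le := l.filter (fun w => w.a == b) with hle
    have hlep : le.Pairwise WSep := hp.sublist (List.filter_sublist (l := l))
    have hleb : ∀ w ∈ le, w.a = b := by
      intro w hw
      have := (List.mem_filter.mp hw).2
      simpa using this
    -- cascade to an alternating family of size 2 * Gfun k + 3
    have hcasc : 2 ^ (2 * Gfun k + 2 + 1) ≤ le.length + 1 := by
      rw [show 2 * Gfun k + 2 + 1 = 2 * Gfun k + 3 by omega]
      omega
    obtain ⟨w0, la, hlalen, hlap, hlach, _, _⟩ :=
      cascade hf (2 * Gfun k + 2) b le hlep hleb hcasc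
    set lalt := w0 :: la with hlalt
    have hne : lalt ≠ [] := by simp [hlalt]
    set wlast := lalt.getLast hne with hwlast
    set front := lalt.dropLast with hfront
    have hdecomp : front ++ [wlast] = lalt := List.dropLast_append_getLast hne
    have hfp : front.Pairwise WSep := hlap.sublist (by rw [← hdecomp]; simp)
    have hfront_last : ∀ w ∈ front, WSep w wlast := by
      have := hlap
      rw [← hdecomp] at this
      have h2 := (List.pairwise_append.mp this).2.2
      intro w hw
      exact h2 w hw wlast (by simp)
    have hfch : front.Chain' (fun x y => x.a ≠ y.a) := by
      have := hlach
      rw [← hdecomp] at this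
      exact this.left_of_append
    have hflen : front.length = 2 * Gfun k + 2 := by
      have : lalt.length = 2 * Gfun k + 3 := hlalen
      have h2 : front.length = lalt.length - 1 := by
        rw [hfront, List.length_dropLast]
      omega
    -- anchor at wlast.u
    have haN : (wlast.u : ℕ) < N := by
      have h1 := Fin.lt_def.mp wlast.huv
      have h2 := wlast.hvhi
      have h3 := wlast.hhiN
      omega
    have hN'a : wlast.lo ≤ (wlast.u : ℕ) := wlast.hlou
    have hhiN' : ∀ w ∈ front, w.hi < wlast.lo := fun w hw => hfront_last w hw
    have hlen2t : 2 * (Gfun k + 1) ≤ front.length := by omega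
    obtain ⟨l2, hl2len, hl2p, _⟩ :=
      harvest hf wlast.u haN wlast.lo hN'a (Gfun k + 1) front hfp hfch hhiN' hlen2t
    have := ih wlast.lo (fun X => sgn (insert wlast.u X)) l2
      (flipB_anchor hf wlast.u hN'a haN) hl2p
    omega



variable {n : ℕ}

lemma flipSeq_flipB {k : ℕ} {sgn : Finset (Fin n) → Bool} (hf : FlipSeq k sgn) :
    FlipB n k n sgn := by
  intro A hA _ i j l hij hjl _ hi hj hl hne
  by_contra hcon
  exact hf A hA ⟨i, j, l, hij, hjl, hi, hj, hl, hne, fun h => hcon h.symm⟩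

section Extract

variable {k m : ℕ} {sgn : Finset (Fin n) → Bool} {c : Fin (m + 1) → Fin n}

/-- Extract a witness at each internal cut of the greedy partition. -/
lemma block_wit (hf : FlipB n k n sgn) (hg : IsGreedyPartition k sgn m c)
    (j : Fin m) (hj : (j : ℕ) + 1 < m) :
    ∃ w : Wit n k n sgn, w.lo = (c j.castSucc : ℕ) ∧ w.hi = (c j.succ : ℕ) + 1 := by
  obtain ⟨h0, hlast, hmono, hhom, hmax⟩ := hg
  set cs := c j.castSucc with hcs
  set ct := c j.succ with hct
  have hctlt : (ct : ℕ) < n - 1 := by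
    have h1 : j.succ < Fin.last m := by
      rw [Fin.lt_def]
      simpa using hj
    have := hmono h1
    rw [Fin.lt_def, hlast] at this
    exact this
  have hn1 : (ct : ℕ) + 1 < n := by
    have := ct.isLt
    omega
  set e : Fin n := ⟨(ct : ℕ) + 1, hn1⟩ with he
  have hcte : ct < e := by rw [Fin.lt_def]; simp [he]
  have hnh := hmax j e hcte
  obtain ⟨σ, hσ⟩ := hhom j
  rw [IntervalHomog] at hnh
  push_neg at hnh
  obtain ⟨s, hscard, hsbound, hsne⟩ := hnh σ
  have hcsct : cs < ct := by
    have : j.castSucc < j.succ := Fin.castSucc_lt_succ (i := j)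
    exact hmono this
  -- e ∈ s
  have hes : e ∈ s := by
    by_contra hnes
    apply hsne
    apply hσ s hscard
    intro i hi
    obtain ⟨h1, h2⟩ := hsbound i hi
    refine ⟨h1, ?_⟩
    rw [Fin.le_def] at h2 ⊢
    have hine : i ≠ e := fun h => hnes (h ▸ hi)
    have : (i : ℕ) ≠ (e : ℕ) := fun h => hine (Fin.ext h)
    simp only [he] at h2 this
    omega
  set A := s.erase e with hA
  have hAcard : A.card = k := by
    rw [hA, Finset.card_erase_of_mem hes, hscard]
    omega
  have hAbound : ∀ x ∈ A, cs ≤ x ∧ (x : ℕ) ≤ (ct : ℕ) := by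
    intro x hx
    have hxs := Finset.mem_of_mem_erase hx
    have hxne : x ≠ e := Finset.ne_of_mem_erase hx
    obtain ⟨h1, h2⟩ := hsbound x hxs
    refine ⟨h1, ?_⟩
    rw [Fin.le_def] at h2
    have : (x : ℕ) ≠ (e : ℕ) := fun h => hxne (Fin.ext h)
    simp only [he] at h2 this
    omega
  have hins : insert e A = s := Finset.insert_erase hes
  have hsgnA : sgn (insert e A) ≠ σ := by rw [hins]; exact hsne
  -- the interval [cs, e] has at least k+2 elements
  have hIcard : k + 2 ≤ (Finset.Icc cs e).card := by
    by_contra hsmall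
    push_neg at hsmall
    apply hmax j e hcte
    refine ⟨sgn (Finset.Icc cs e), ?_⟩
    intro s' hs'card hs'bound
    have hsub : s' ⊆ Finset.Icc cs e := by
      intro x hx
      rw [Finset.mem_Icc]
      exact hs'bound x hx
    have : s' = Finset.Icc cs e := Finset.eq_of_subset_of_card_le hsub (by omega)
    rw [this]
  have hIbeq : Finset.Icc cs ct = (Finset.Icc cs e).erase e := by
    ext x
    rw [Finset.mem_erase, Finset.mem_Icc, Finset.mem_Icc]
    constructor
    · intro ⟨h1, h2⟩
      have hxct : (x : ℕ) ≤ (ct : ℕ) := Fin.le_def.mp h2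
      refine ⟨?_, h1, ?_⟩
      · intro hxe
        rw [hxe] at hxct
        simp only [he] at hxct
        omega
      · rw [Fin.le_def]
        simp only [he]
        omega
    · intro ⟨hne', h1, h2⟩
      have hxe : (x : ℕ) ≤ (e : ℕ) := Fin.le_def.mp h2
      have : (x : ℕ) ≠ (e : ℕ) := fun h => hne' (Fin.ext h)
      refine ⟨h1, ?_⟩
      rw [Fin.le_def]
      simp only [he] at hxe this
      omega
  have hIbcard : k + 1 ≤ (Finset.Icc cs ct).card := by
    rw [hIbeq, Finset.card_erase_of_mem (by rw [Finset.mem_Icc]; exact ⟨le_of_lt (lt_of_lt_of_le hcsct (le_of_lt hcte)), le_refl e⟩)]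
    omega
  have hAsub : A ⊆ Finset.Icc cs ct := by
    intro x hx
    rw [Finset.mem_Icc]
    obtain ⟨h1, h2⟩ := hAbound x hx
    exact ⟨h1, Fin.le_def.mpr h2⟩
  have hu : (Finset.Icc cs ct \ A).Nonempty := by
    rw [← Finset.card_pos, Finset.card_sdiff_of_subset hAsub, hAcard]
    omega
  obtain ⟨u, humem⟩ := hu
  obtain ⟨huI, huA⟩ := Finset.mem_sdiff.mp humem
  rw [Finset.mem_Icc] at huI
  have hsgnU : sgn (insert u A) = σ := by
    apply hσ
    · rw [Finset.card_insert_of_notMem huA, hAcard]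
    · intro i hi
      rcases Finset.mem_insert.mp hi with h | h
      · exact h ▸ huI
      · obtain ⟨h1, h2⟩ := hAbound i h
        exact ⟨h1, Fin.le_def.mpr h2⟩
  have hune : sgn (insert u A) ≠ sgn (insert e A) := by
    rw [hsgnU]
    exact fun h => hsgnA h.symm
  have hue : u < e := by
    rw [Fin.lt_def]
    have := Fin.le_def.mp huI.2
    simp only [he]
    omega
  have heA : e ∉ A := Finset.notMem_erase e s
  refine ⟨mkWit hf A u e (cs : ℕ) ((ct : ℕ) + 1) hAcard ?_ ?_ ?_ ?_ ?_ hue huA heA hune,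
    rfl, rfl⟩
  · intro x hx
    exact Fin.le_def.mp (hAbound x hx).1
  · intro x hx
    have := (hAbound x hx).2
    omega
  · omega
  · exact Fin.le_def.mp huI.1
  · simp [he]

end Extract


section Build

variable {k m : ℕ} {sgn : Finset (Fin n) → Bool} {c : Fin (m + 1) → Fin n}

/-- Value of the cut sequence, extended to `ℕ`. -/
def cv (c : Fin (m + 1) → Fin n) (x : ℕ) : ℕ :=
  (c ⟨min x m, Nat.lt_succ_of_le (min_le_right x m)⟩ : ℕ)

lemma cv_mono (hmono : StrictMono c) {x y : ℕ} (hxy : x ≤ y) : cv c x ≤ cv c y := by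
  unfold cv
  apply Fin.le_def.mp
  apply hmono.monotone
  rw [Fin.le_def]
  simp only
  omega

lemma cv_strict (hmono : StrictMono c) {x y : ℕ} (hxy : x < y) (hy : y ≤ m) :
    cv c x < cv c y := by
  unfold cv
  apply Fin.lt_def.mp
  apply hmono
  rw [Fin.lt_def]
  simp only
  omega

lemma cv_eq (c : Fin (m + 1) → Fin n) {x : ℕ} (hx : x ≤ m) (h : x < m + 1) :
    cv c x = (c ⟨x, h⟩ : ℕ) := by
  have heq : (⟨min x m, Nat.lt_succ_of_le (min_le_right x m)⟩ : Fin (m + 1)) = ⟨x, h⟩ :=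
    Fin.ext (by simp only; omega)
  unfold cv
  rw [heq]

lemma build_list (hf : FlipB n k n sgn) (hg : IsGreedyPartition k sgn m c) :
    ∀ (t s : ℕ), s + 3 * t ≤ m + 1 →
      ∃ l : List (Wit n k n sgn), l.length = t ∧ l.Pairwise WSep ∧
        ∀ w ∈ l, ∃ jj, s ≤ jj ∧ jj + 1 < m ∧ w.lo = cv c jj ∧ w.hi = cv c (jj + 1) + 1 := by
  have hmono := hg.2.2.1
  intro t
  induction t with
  | zero =>
    intro s _
    exact ⟨[], rfl, List.Pairwise.nil, by simp⟩
  | succ t ih =>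
    intro s hs
    have hs1m : s + 1 < m := by omega
    set j : Fin m := ⟨s, by omega⟩ with hjdef
    obtain ⟨w, hwlo, hwhi⟩ := block_wit hf hg j (by simp [hjdef]; omega)
    have hwlo' : w.lo = cv c s := by
      rw [hwlo, cv_eq c (by omega : s ≤ m) (by omega)]
      congr 1
    have hwhi' : w.hi = cv c (s + 1) + 1 := by
      rw [hwhi, cv_eq c (by omega : s + 1 ≤ m) (by omega)]
      congr 1
    obtain ⟨l', hl'len, hl'p, hl'mem⟩ := ih (s + 3) (by omega)
    refine ⟨w :: l', by simp [hl'len], ?_, ?_⟩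
    · rw [List.pairwise_cons]
      refine ⟨?_, hl'p⟩
      intro w' hw'
      obtain ⟨jj, hjj3, hjjm, hw'lo, _⟩ := hl'mem w' hw'
      show w.hi < w'.lo
      rw [hwhi', hw'lo]
      have h1 : cv c (s + 1) < cv c (s + 2) := cv_strict hmono (by omega) (by omega)
      have h2 : cv c (s + 2) < cv c (s + 3) := cv_strict hmono (by omega) (by omega)
      have h3 : cv c (s + 3) ≤ cv c jj := cv_mono hmono (by omega)
      omega
    · intro w' hw'
      rcases List.mem_cons.mp hw' with h | h
      · exact ⟨s, le_refl s, hs1m, h ▸ hwlo', h ▸ hwhi'⟩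
      · obtain ⟨jj, hjj3, hjjm, hw'lo, hw'hi⟩ := hl'mem w' h
        exact ⟨jj, by omega, hjjm, hw'lo, hw'hi⟩

end Build

/-- The key finite bound. -/
theorem greedy_bound {k m : ℕ} {sgn : Finset (Fin n) → Bool} {c : Fin (m + 1) → Fin n}
    (hflip : FlipSeq k sgn) (hg : IsGreedyPartition k sgn m c) :
    m ≤ 3 * Gfun k + 3 := by
  by_contra hcon
  push_neg at hcon
  have hf := flipSeq_flipB hflip
  obtain ⟨l, hlen, hp, _⟩ := build_list hf hg (Gfun k + 1) 0 (by omega)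
  have := main_bound k n sgn l hf hp
  omega

end FlipAux

/-- For every `k ≥ 1` there is a constant `c(k)` such that the greedy
partition of every flip `k`-sequence has at most `c(k)` blocks. -/
theorem flip_sequence_few_blocks :
    ∀ k : ℕ, 1 ≤ k → ∃ C : ℕ,
      ∀ (n m : ℕ) (sgn : Finset (Fin n) → Bool) (c : Fin (m + 1) → Fin n),
        FlipSeq k sgn → IsGreedyPartition k sgn m c → m ≤ C := by
  intro k _
  exact ⟨3 * FlipAux.Gfun k + 3, fun n m sgn c hflip hg => FlipAux.greedy_bound hflip hg⟩
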